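/- Every push-pop regular expression e over Σ can be provably transformed to normal form: there exists an expression e' that is a finite sum of products ē·d with ē a pure pop expression and d a pure push expression, such that e = e' is derivable in the equational theory of Kleene algebra augmented with the axioms push a · pop a = 1 for all a ∈ V and push a · pop b = 0 for all a ≠ b in V. -/

import Mathlib

/-- Push-pop StacKAT expressions: regular-expression terms over push/pop of values in `V`. -/
inductive Exp (V : Type) : Type
  | zero : Exp V
  | one : Exp V
  | plus : Exp V → Exp V → Exp V
  | seq : Exp V → Exp V → Exp V
  | star : Exp V → Exp V
  | push : V → Exp V
  | pop : V → Exp V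

/-- `n`-fold relational composition of a relation. -/
def relPow {α : Type*} (r : α → α → Prop) : ℕ → α → α → Prop
  | 0 => Eq
  | n + 1 => Relation.Comp r (relPow r n)

/-- The relational semantics of a push-pop StacKAT expression, as a binary relation on stacks. -/
def denote {V : Type} : Exp V → List V → List V → Prop
  | Exp.zero => fun _ _ => False
  | Exp.one => Eq
  | Exp.plus e f => fun s t => denote e s t ∨ denote f s t
  | Exp.seq e f => Relation.Comp (denote e) (denote f)
  | Exp.star e => fun s t => ∃ n, relPow (denote e) n s t
  | Exp.push v => fun s t => t = v :: s
  | Exp.pop v => fun s t => s = v :: t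

/-- Derivability in the equational theory of Kleene algebra over push-pop regular
expressions, augmented with the axioms `push a · pop a = 1` and
`push a · pop b = 0` for `a ≠ b`. Inequality `e ≤ f` is encoded as `e + f = f`. -/
inductive KAeq {V : Type} : Exp V → Exp V → Prop
  | refl (e : Exp V) : KAeq e e
  | symm {e f : Exp V} : KAeq e f → KAeq f e
  | trans {e f g : Exp V} : KAeq e f → KAeq f g → KAeq e g
  | plus_congr {e₁ e₂ f₁ f₂ : Exp V} :
      KAeq e₁ e₂ → KAeq f₁ f₂ → KAeq (e₁.plus f₁) (e₂.plus f₂)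
  | seq_congr {e₁ e₂ f₁ f₂ : Exp V} :
      KAeq e₁ e₂ → KAeq f₁ f₂ → KAeq (e₁.seq f₁) (e₂.seq f₂)
  | star_congr {e f : Exp V} : KAeq e f → KAeq e.star f.star
  | plus_assoc (e f g : Exp V) : KAeq ((e.plus f).plus g) (e.plus (f.plus g))
  | plus_comm (e f : Exp V) : KAeq (e.plus f) (f.plus e)
  | plus_idem (e : Exp V) : KAeq (e.plus e) e
  | plus_zero (e : Exp V) : KAeq (e.plus Exp.zero) e
  | seq_assoc (e f g : Exp V) : KAeq ((e.seq f).seq g) (e.seq (f.seq g))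
  | one_seq (e : Exp V) : KAeq (Exp.one.seq e) e
  | seq_one (e : Exp V) : KAeq (e.seq Exp.one) e
  | zero_seq (e : Exp V) : KAeq (Exp.zero.seq e) Exp.zero
  | seq_zero (e : Exp V) : KAeq (e.seq Exp.zero) Exp.zero
  | left_distrib (e f g : Exp V) :
      KAeq (e.seq (f.plus g)) ((e.seq f).plus (e.seq g))
  | right_distrib (e f g : Exp V) :
      KAeq ((e.plus f).seq g) ((e.seq g).plus (f.seq g))
  /-- `1 + e·e* ≤ e*` -/
  | star_unfold_left (e : Exp V) :
      KAeq ((Exp.one.plus (e.seq e.star)).plus e.star) e.star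
  /-- `1 + e*·e ≤ e*` -/
  | star_unfold_right (e : Exp V) :
      KAeq ((Exp.one.plus (e.star.seq e)).plus e.star) e.star
  /-- `b + e·x ≤ x ⟹ e*·b ≤ x` -/
  | star_fix_left {e b x : Exp V} :
      KAeq ((b.plus (e.seq x)).plus x) x → KAeq ((e.star.seq b).plus x) x
  /-- `b + x·e ≤ x ⟹ b·e* ≤ x` -/
  | star_fix_right {e b x : Exp V} :
      KAeq ((b.plus (x.seq e)).plus x) x → KAeq ((b.seq e.star).plus x) x
  /-- `push a · pop a = 1` -/
  | push_pop (a : V) : KAeq ((Exp.push a).seq (Exp.pop a)) Exp.one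
  /-- `push a · pop b = 0` for `a ≠ b` -/
  | push_pop_ne {a b : V} : a ≠ b → KAeq ((Exp.push a).seq (Exp.pop b)) Exp.zero

/-- A pure push expression: all its letters are push symbols (`0` and `1` count). -/
inductive PurePush {V : Type} : Exp V → Prop
  | zero : PurePush Exp.zero
  | one : PurePush Exp.one
  | push (v : V) : PurePush (Exp.push v)
  | plus {e f : Exp V} : PurePush e → PurePush f → PurePush (e.plus f)
  | seq {e f : Exp V} : PurePush e → PurePush f → PurePush (e.seq f)
  | star {e : Exp V} : PurePush e → PurePush e.star

/-- A pure pop expression: all its letters are pop symbols (`0` and `1` count). -/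
inductive PurePop {V : Type} : Exp V → Prop
  | zero : PurePop Exp.zero
  | one : PurePop Exp.one
  | pop (v : V) : PurePop (Exp.pop v)
  | plus {e f : Exp V} : PurePop e → PurePop f → PurePop (e.plus f)
  | seq {e f : Exp V} : PurePop e → PurePop f → PurePop (e.seq f)
  | star {e : Exp V} : PurePop e → PurePop e.star

/-- Normal form: a finite sum of products `ē·d` with `ē` pure pop and `d` pure push. -/
inductive IsNF {V : Type} : Exp V → Prop
  | prod {ebar d : Exp V} : PurePop ebar → PurePush d → IsNF (ebar.seq d)
  | plus {e f : Exp V} : IsNF e → IsNF f → IsNF (e.plus f)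

open Computability

namespace StacKAT

variable {V : Type}

instance kaSetoid (V : Type) : Setoid (Exp V) :=
  ⟨KAeq, ⟨KAeq.refl, KAeq.symm, KAeq.trans⟩⟩

abbrev Q (V : Type) := Quotient (kaSetoid V)

def mk (e : Exp V) : Q V := Quotient.mk (kaSetoid V) e

lemma sound {a b : Exp V} (h : KAeq a b) : mk a = mk b := Quotient.sound h

lemma mk_eq {a b : Exp V} : mk a = mk b ↔ KAeq a b := ⟨Quotient.exact, sound⟩

instance : Zero (Q V) := ⟨mk Exp.zero⟩
instance : One (Q V) := ⟨mk Exp.one⟩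
instance : Add (Q V) := ⟨Quotient.map₂ Exp.plus (fun _ _ h _ _ h' => KAeq.plus_congr h h')⟩
instance : Mul (Q V) := ⟨Quotient.map₂ Exp.seq (fun _ _ h _ _ h' => KAeq.seq_congr h h')⟩
instance : KStar (Q V) := ⟨Quotient.map Exp.star (fun _ _ h => KAeq.star_congr h)⟩

@[simp] lemma mk_plus (a b : Exp V) : mk (a.plus b) = mk a + mk b := rfl
@[simp] lemma mk_seq (a b : Exp V) : mk (a.seq b) = mk a * mk b := rfl
@[simp] lemma mk_star (a : Exp V) : mk a.star = (mk a)∗ := rfl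
@[simp] lemma mk_zero : (mk Exp.zero : Q V) = 0 := rfl
@[simp] lemma mk_one : (mk Exp.one : Q V) = 1 := rfl

instance : Semiring (Q V) where
  add_assoc := by rintro ⟨a⟩ ⟨b⟩ ⟨c⟩; exact sound (KAeq.plus_assoc a b c)
  add_comm := by rintro ⟨a⟩ ⟨b⟩; exact sound (KAeq.plus_comm a b)
  zero_add := by
    rintro ⟨a⟩; exact sound ((KAeq.plus_comm _ a).trans (KAeq.plus_zero a))
  add_zero := by rintro ⟨a⟩; exact sound (KAeq.plus_zero a)
  mul_assoc := by rintro ⟨a⟩ ⟨b⟩ ⟨c⟩; exact sound (KAeq.seq_assoc a b c)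
  one_mul := by rintro ⟨a⟩; exact sound (KAeq.one_seq a)
  mul_one := by rintro ⟨a⟩; exact sound (KAeq.seq_one a)
  zero_mul := by rintro ⟨a⟩; exact sound (KAeq.zero_seq a)
  mul_zero := by rintro ⟨a⟩; exact sound (KAeq.seq_zero a)
  left_distrib := by rintro ⟨a⟩ ⟨b⟩ ⟨c⟩; exact sound (KAeq.left_distrib a b c)
  right_distrib := by rintro ⟨a⟩ ⟨b⟩ ⟨c⟩; exact sound (KAeq.right_distrib a b c)
  nsmul := nsmulRec
  npow := npowRec

instance : IdemSemiring (Q V) :=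
  IdemSemiring.ofSemiring (by rintro ⟨a⟩; exact sound (KAeq.plus_idem a))

lemma le_def {a b : Q V} : a ≤ b ↔ a + b = b := Iff.rfl

lemma mk_le_mk {a b : Exp V} : mk a ≤ mk b ↔ KAeq (a.plus b) b := mk_eq

instance : KleeneAlgebra (Q V) where
  one_le_kstar := by
    rintro ⟨a⟩
    have h : (1 : Q V) + mk a * (mk a)∗ + (mk a)∗ = (mk a)∗ :=
      sound (KAeq.star_unfold_left a)
    exact le_trans (self_le_add_right 1 (mk a * (mk a)∗)) (le_def.2 h)
  mul_kstar_le_kstar := by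
    rintro ⟨a⟩
    have h : (1 : Q V) + mk a * (mk a)∗ + (mk a)∗ = (mk a)∗ :=
      sound (KAeq.star_unfold_left a)
    exact le_trans (self_le_add_left _ 1) (le_def.2 h)
  kstar_mul_le_kstar := by
    rintro ⟨a⟩
    have h : (1 : Q V) + (mk a)∗ * mk a + (mk a)∗ = (mk a)∗ :=
      sound (KAeq.star_unfold_right a)
    exact le_trans (self_le_add_left _ 1) (le_def.2 h)
  kstar_mul_le_self := by
    rintro ⟨a⟩ ⟨b⟩ h
    have h' : KAeq ((a.seq b).plus b) b := mk_eq.1 (le_def.1 h)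
    have h2 : KAeq ((b.plus (a.seq b)).plus b) b :=
      (KAeq.plus_congr (KAeq.plus_comm _ _) (KAeq.refl b)).trans
        ((KAeq.plus_assoc _ _ _).trans
          ((KAeq.plus_congr (KAeq.refl _) (KAeq.plus_idem b)).trans h'))
    exact le_def.2 (sound (KAeq.star_fix_left h2))
  mul_kstar_le_self := by
    rintro ⟨a⟩ ⟨b⟩ h
    have h' : KAeq ((b.seq a).plus b) b := mk_eq.1 (le_def.1 h)
    have h2 : KAeq ((b.plus (b.seq a)).plus b) b :=
      (KAeq.plus_congr (KAeq.plus_comm _ _) (KAeq.refl b)).trans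
        ((KAeq.plus_assoc _ _ _).trans
          ((KAeq.plus_congr (KAeq.refl _) (KAeq.plus_idem b)).trans h'))
    exact le_def.2 (sound (KAeq.star_fix_right h2))


open scoped Classical

/-! ### Basic order and sum lemmas -/

lemma kstar_unfold (a : Q V) : a∗ = 1 + a * a∗ := by
  refine le_antisymm ?_ (add_le one_le_kstar mul_kstar_le_kstar)
  refine kstar_le_of_mul_le_right (self_le_add_right _ _) ?_
  rw [mul_add, mul_one]
  refine add_le ?_ ?_
  · exact le_add_of_le_right (le_mul_of_one_le_right' one_le_kstar)
  · exact le_add_of_le_right (mul_le_mul_right mul_kstar_le_kstar a)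

lemma sum_le_of_le {ι : Type*} (s : Finset ι) (f : ι → Q V) (c : Q V)
    (h : ∀ i ∈ s, f i ≤ c) : ∑ i ∈ s, f i ≤ c :=
  Finset.sum_induction f (· ≤ c) (fun _ _ => add_le) (zero_le : (0 : Q V) ≤ c) h

lemma le_sum {ι : Type*} {s : Finset ι} (f : ι → Q V) {i : ι} (hi : i ∈ s) :
    f i ≤ ∑ j ∈ s, f j :=
  Finset.single_le_sum (fun j _ => (zero_le : (0 : Q V) ≤ f j)) hi

lemma mem_le_listSum {l : List (Q V)} {a : Q V} (h : a ∈ l) : a ≤ l.sum := by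
  induction l with
  | nil => simp at h
  | cons b l ih =>
    rcases List.mem_cons.1 h with rfl | h
    · simpa using self_le_add_right _ _
    · simpa using le_add_of_le_right (ih h)

/-! ### Syntactic operations -/

def nul : Exp V → Bool
  | Exp.one => true
  | Exp.star _ => true
  | Exp.plus a b => nul a || nul b
  | Exp.seq a b => nul a && nul b
  | _ => false

def ltr (b : Bool) (v : V) : Exp V := if b then Exp.pop v else Exp.push v

noncomputable def pderiv (b : Bool) (v : V) : Exp V → List (Exp V)
  | Exp.push w => if b then [] else if w = v then [Exp.one] else []
  | Exp.pop w => if b then (if w = v then [Exp.one] else []) else []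
  | Exp.plus a c => pderiv b v a ++ pderiv b v c
  | Exp.seq a c => (pderiv b v a).map (·.seq c) ++ (if nul a then pderiv b v c else [])
  | Exp.star a => (pderiv b v a).map (·.seq a.star)
  | _ => []

def eps : Exp V → List (Exp V)
  | Exp.plus a c => [a, c]
  | Exp.seq a c => (if nul a then [c] else []) ++ (eps a).map (·.seq c)
  | _ => []

def unf : Exp V → List (Exp V)
  | Exp.star a => [a.seq a.star]
  | Exp.seq a c => (unf a).map (·.seq c)
  | _ => []

noncomputable def CL : Exp V → List (Exp V)
  | Exp.zero => [Exp.zero]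
  | Exp.one => [Exp.one]
  | Exp.push w => [Exp.push w, Exp.one]
  | Exp.pop w => [Exp.pop w, Exp.one]
  | Exp.plus a c => (a.plus c) :: (CL a ++ CL c)
  | Exp.seq a c => (CL a).map (·.seq c) ++ CL c
  | Exp.star a => a.star :: (CL a).map (·.seq a.star)

/-! ### Soundness lemmas -/

lemma nul_sound : ∀ {t : Exp V}, nul t = true → 1 ≤ mk t := by
  intro t
  induction t with
  | one => exact fun _ => le_refl _
  | star a ih => exact fun _ => by simpa using (one_le_kstar (a := mk a))
  | plus a c iha ihc =>
    intro h
    rcases Bool.or_eq_true_iff.1 h with h | h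
    · exact (iha h).trans (by simpa using self_le_add_right _ _)
    · exact (ihc h).trans (by simpa using self_le_add_left _ _)
  | seq a c iha ihc =>
    intro h
    rcases Bool.and_eq_true_iff.1 h with ⟨h1, h2⟩
    simpa using mul_le_mul' (iha h1) (ihc h2)
  | zero => intro h; simp [nul] at h
  | push w => intro h; simp [nul] at h
  | pop w => intro h; simp [nul] at h

lemma pderiv_sound {b : Bool} {v : V} :
    ∀ {t t' : Exp V}, t' ∈ pderiv b v t → mk (ltr b v) * mk t' ≤ mk t := by
  intro t
  induction t with
  | zero => intro t' h; simp [pderiv] at h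
  | one => intro t' h; simp [pderiv] at h
  | push w =>
    intro t' h
    rcases b with _ | _
    · by_cases hw : w = v
      · simp [pderiv, hw] at h
        subst h; subst hw
        simp [ltr]
      · simp [pderiv, hw] at h
    · simp [pderiv] at h
  | pop w =>
    intro t' h
    rcases b with _ | _
    · simp [pderiv] at h
    · by_cases hw : w = v
      · simp [pderiv, hw] at h
        subst h; subst hw
        simp [ltr]
      · simp [pderiv, hw] at h
  | plus a c iha ihc =>
    intro t' h
    rcases List.mem_append.1 h with h | h
    · exact (iha h).trans (by simpa using self_le_add_right _ _)
    · exact (ihc h).trans (by simpa using self_le_add_left _ _)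
  | seq a c iha ihc =>
    intro t' h
    rcases List.mem_append.1 h with h | h
    · rcases List.mem_map.1 h with ⟨u, hu, rfl⟩
      have := iha hu
      simp only [mk_seq, ← mul_assoc]
      exact mul_le_mul_left this _
    · split at h
      · next hn =>
        have h1 : (1 : Q V) ≤ mk a := nul_sound hn
        have := ihc h
        simp only [mk_seq]
        calc mk (ltr b v) * mk t' ≤ mk c := this
        _ = 1 * mk c := (one_mul _).symm
        _ ≤ mk a * mk c := mul_le_mul_left h1 _
      · simp at h
  | star a iha =>
    intro t' h
    rcases List.mem_map.1 h with ⟨u, hu, rfl⟩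
    have := iha hu
    simp only [mk_seq, mk_star, ← mul_assoc]
    exact (mul_le_mul_left this _).trans mul_kstar_le_kstar

lemma eps_sound : ∀ {t t' : Exp V}, t' ∈ eps t → mk t' ≤ mk t := by
  intro t
  induction t with
  | plus a c _ _ =>
    intro t' h
    rcases (by simpa [eps] using h : t' = a ∨ t' = c) with rfl | rfl
    · simpa using self_le_add_right _ _
    · simpa using self_le_add_left _ _
  | seq a c iha _ =>
    intro t' h
    rcases List.mem_append.1 h with h | h
    · split at h
      · next hn =>
        have hc : t' = c := by simpa using h
        subst t'
        calc mk c = 1 * mk c := (one_mul _).symm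
        _ ≤ mk a * mk c := mul_le_mul_left (nul_sound hn) _
      · simp at h
    · rcases List.mem_map.1 h with ⟨u, hu, rfl⟩
      simpa using mul_le_mul_left (iha hu) _
  | zero => intro t' h; simp [eps] at h
  | one => intro t' h; simp [eps] at h
  | push w => intro t' h; simp [eps] at h
  | pop w => intro t' h; simp [eps] at h
  | star a _ => intro t' h; simp [eps] at h

lemma unf_sound : ∀ {t t' : Exp V}, t' ∈ unf t → mk t' ≤ mk t := by
  intro t
  induction t with
  | star a _ =>
    intro t' h
    simp [unf] at h; subst h
    simpa using mul_kstar_le_kstar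
  | seq a c iha _ =>
    intro t' h
    rcases List.mem_map.1 (by simpa [unf] using h) with ⟨u, hu, rfl⟩
    simpa using mul_le_mul_left (iha hu) _
  | zero => intro t' h; simp [unf] at h
  | one => intro t' h; simp [unf] at h
  | push w => intro t' h; simp [unf] at h
  | pop w => intro t' h; simp [unf] at h
  | plus a c _ _ => intro t' h; simp [unf] at h

/-! ### Closure lemmas for CL -/

lemma CL_self : ∀ t : Exp V, t ∈ CL t := by
  intro t
  cases t with
  | zero => simp [CL]
  | one => simp [CL]
  | push w => simp [CL]
  | pop w => simp [CL]
  | plus a c => simp [CL]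
  | seq a c => exact List.mem_append.2 (Or.inl (List.mem_map.2 ⟨a, CL_self a, rfl⟩))
  | star a => simp [CL]

lemma CL_pderiv {b : Bool} :
    ∀ (e : Exp V), ∀ t ∈ CL e, ∀ v, ∀ t' ∈ pderiv b v t, t' ∈ CL e := by
  intro e
  induction e with
  | zero => intro t ht v t' h; simp [CL] at ht; subst ht; simp [pderiv] at h
  | one => intro t ht v t' h; simp [CL] at ht; subst ht; simp [pderiv] at h
  | push w =>
    intro t ht v t' h
    rcases (by simpa [CL] using ht : t = Exp.push w ∨ t = Exp.one) with rfl | rfl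
    · rcases b with _|_
      · by_cases hw : w = v
        · simp [pderiv, hw] at h; subst h; simp [CL]
        · simp [pderiv, hw] at h
      · simp [pderiv] at h
    · simp [pderiv] at h
  | pop w =>
    intro t ht v t' h
    rcases (by simpa [CL] using ht : t = Exp.pop w ∨ t = Exp.one) with rfl | rfl
    · rcases b with _|_
      · simp [pderiv] at h
      · by_cases hw : w = v
        · simp [pderiv, hw] at h; subst h; simp [CL]
        · simp [pderiv, hw] at h
    · simp [pderiv] at h
  | plus a c iha ihc =>
    intro t ht v t' h
    rcases (by simpa [CL] using ht : t = a.plus c ∨ (t ∈ CL a ∨ t ∈ CL c)) with rfl | ht | ht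
    · rcases List.mem_append.1 h with h | h
      · exact List.mem_cons.2 (Or.inr (List.mem_append.2 (Or.inl (iha a (CL_self a) v t' h))))
      · exact List.mem_cons.2 (Or.inr (List.mem_append.2 (Or.inr (ihc c (CL_self c) v t' h))))
    · exact List.mem_cons.2 (Or.inr (List.mem_append.2 (Or.inl (iha t ht v t' h))))
    · exact List.mem_cons.2 (Or.inr (List.mem_append.2 (Or.inr (ihc t ht v t' h))))
  | seq a c iha ihc =>
    intro t ht v t' h
    rcases List.mem_append.1 ht with ht | ht
    · rcases List.mem_map.1 ht with ⟨u, hu, rfl⟩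
      rcases List.mem_append.1 h with h | h
      · rcases List.mem_map.1 h with ⟨u', hu', rfl⟩
        exact List.mem_append.2 (Or.inl (List.mem_map.2 ⟨u', iha u hu v u' hu', rfl⟩))
      · split at h
        · exact List.mem_append.2 (Or.inr (ihc c (CL_self c) v t' h))
        · simp at h
    · exact List.mem_append.2 (Or.inr (ihc t ht v t' h))
  | star a iha =>
    intro t ht v t' h
    rcases (by simpa [CL] using ht :
        t = a.star ∨ ∃ u ∈ CL a, u.seq a.star = t) with rfl | ⟨u, hu, rfl⟩
    · rcases List.mem_map.1 h with ⟨u', hu', rfl⟩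
      exact List.mem_cons.2 (Or.inr (List.mem_map.2 ⟨u', iha a (CL_self a) v u' hu', rfl⟩))
    · rcases List.mem_append.1 h with h | h
      · rcases List.mem_map.1 h with ⟨u', hu', rfl⟩
        exact List.mem_cons.2 (Or.inr (List.mem_map.2 ⟨u', iha u hu v u' hu', rfl⟩))
      · split at h
        · rcases List.mem_map.1 h with ⟨u', hu', rfl⟩
          exact List.mem_cons.2 (Or.inr (List.mem_map.2 ⟨u', iha a (CL_self a) v u' hu', rfl⟩))
        · simp at h

lemma CL_eps : ∀ (e : Exp V), ∀ t ∈ CL e, ∀ t' ∈ eps t, t' ∈ CL e := by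
  intro e
  induction e with
  | zero => intro t ht t' h; simp [CL] at ht; subst ht; simp [eps] at h
  | one => intro t ht t' h; simp [CL] at ht; subst ht; simp [eps] at h
  | push w =>
    intro t ht t' h
    rcases (by simpa [CL] using ht : t = Exp.push w ∨ t = Exp.one) with rfl | rfl <;>
      simp [eps] at h
  | pop w =>
    intro t ht t' h
    rcases (by simpa [CL] using ht : t = Exp.pop w ∨ t = Exp.one) with rfl | rfl <;>
      simp [eps] at h
  | plus a c iha ihc =>
    intro t ht t' h
    rcases (by simpa [CL] using ht : t = a.plus c ∨ (t ∈ CL a ∨ t ∈ CL c)) with rfl | ht | ht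
    · rcases (by simpa [eps] using h : t' = a ∨ t' = c) with h' | h' <;> subst t'
      · exact List.mem_cons.2 (Or.inr (List.mem_append.2 (Or.inl (CL_self a))))
      · exact List.mem_cons.2 (Or.inr (List.mem_append.2 (Or.inr (CL_self c))))
    · exact List.mem_cons.2 (Or.inr (List.mem_append.2 (Or.inl (iha t ht t' h))))
    · exact List.mem_cons.2 (Or.inr (List.mem_append.2 (Or.inr (ihc t ht t' h))))
  | seq a c iha ihc =>
    intro t ht t' h
    rcases List.mem_append.1 ht with ht | ht
    · rcases List.mem_map.1 ht with ⟨u, hu, rfl⟩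
      rcases List.mem_append.1 h with h | h
      · split at h
        · have hc : t' = c := by simpa using h
          subst t'
          exact List.mem_append.2 (Or.inr (CL_self c))
        · simp at h
      · rcases List.mem_map.1 h with ⟨u', hu', rfl⟩
        exact List.mem_append.2 (Or.inl (List.mem_map.2 ⟨u', iha u hu u' hu', rfl⟩))
    · exact List.mem_append.2 (Or.inr (ihc t ht t' h))
  | star a iha =>
    intro t ht t' h
    rcases (by simpa [CL] using ht :
        t = a.star ∨ ∃ u ∈ CL a, u.seq a.star = t) with rfl | ⟨u, hu, rfl⟩
    · simp [eps] at h
    · rcases List.mem_append.1 h with h | h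
      · split at h
        · simp at h; subst h; simp [CL]
        · simp at h
      · rcases List.mem_map.1 h with ⟨u', hu', rfl⟩
        exact List.mem_cons.2 (Or.inr (List.mem_map.2 ⟨u', iha u hu u' hu', rfl⟩))

lemma CL_unf : ∀ (e : Exp V), ∀ t ∈ CL e, ∀ t' ∈ unf t, t' ∈ CL e := by
  intro e
  induction e with
  | zero => intro t ht t' h; simp [CL] at ht; subst ht; simp [unf] at h
  | one => intro t ht t' h; simp [CL] at ht; subst ht; simp [unf] at h
  | push w =>
    intro t ht t' h
    rcases (by simpa [CL] using ht : t = Exp.push w ∨ t = Exp.one) with rfl | rfl <;>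
      simp [unf] at h
  | pop w =>
    intro t ht t' h
    rcases (by simpa [CL] using ht : t = Exp.pop w ∨ t = Exp.one) with rfl | rfl <;>
      simp [unf] at h
  | plus a c iha ihc =>
    intro t ht t' h
    rcases (by simpa [CL] using ht : t = a.plus c ∨ (t ∈ CL a ∨ t ∈ CL c)) with rfl | ht | ht
    · simp [unf] at h
    · exact List.mem_cons.2 (Or.inr (List.mem_append.2 (Or.inl (iha t ht t' h))))
    · exact List.mem_cons.2 (Or.inr (List.mem_append.2 (Or.inr (ihc t ht t' h))))
  | seq a c iha ihc =>
    intro t ht t' h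
    rcases List.mem_append.1 ht with ht | ht
    · rcases List.mem_map.1 ht with ⟨u, hu, rfl⟩
      rcases List.mem_map.1 (by simpa [unf] using h) with ⟨u', hu', rfl⟩
      exact List.mem_append.2 (Or.inl (List.mem_map.2 ⟨u', iha u hu u' hu', rfl⟩))
    · exact List.mem_append.2 (Or.inr (ihc t ht t' h))
  | star a iha =>
    intro t ht t' h
    rcases (by simpa [CL] using ht :
        t = a.star ∨ ∃ u ∈ CL a, u.seq a.star = t) with rfl | ⟨u, hu, rfl⟩
    · simp [unf] at h; subst h
      exact List.mem_cons.2 (Or.inr (List.mem_map.2 ⟨a, CL_self a, rfl⟩))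
    · rcases List.mem_map.1 (by simpa [unf] using h) with ⟨u', hu', rfl⟩
      exact List.mem_cons.2 (Or.inr (List.mem_map.2 ⟨u', iha u hu u' hu', rfl⟩))

/-! ### Purity -/

def PureB : Bool → Exp V → Prop
  | true, e => PurePop e
  | false, e => PurePush e

lemma pureB_plus {b : Bool} {a c : Exp V} (h : PureB b (a.plus c)) : PureB b a ∧ PureB b c := by
  cases b <;> cases h <;> exact ⟨‹_›, ‹_›⟩

lemma pureB_seq {b : Bool} {a c : Exp V} (h : PureB b (a.seq c)) : PureB b a ∧ PureB b c := by
  cases b <;> cases h <;> exact ⟨‹_›, ‹_›⟩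

lemma pureB_star {b : Bool} {a : Exp V} (h : PureB b a.star) : PureB b a := by
  cases b <;> cases h <;> exact ‹_›

/-! ### The simulation lemma -/

structure Sys (b : Bool) (S : Set (Exp V)) (c : Q V) (w : Exp V → Q V) : Prop where
  clD : ∀ t ∈ S, ∀ v : V, ∀ t' ∈ pderiv b v t, t' ∈ S
  clE : ∀ t ∈ S, ∀ t' ∈ eps t, t' ∈ S
  clU : ∀ t ∈ S, ∀ t' ∈ unf t, t' ∈ S
  h1 : ∀ t ∈ S, ∀ v : V, ∀ t' ∈ pderiv b v t, mk (ltr b v) * w t' ≤ w t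
  h2 : ∀ t ∈ S, nul t = true → c ≤ w t
  h3 : ∀ t ∈ S, ∀ t' ∈ eps t, w t' ≤ w t
  h4 : ∀ t ∈ S, ∀ t' ∈ unf t, w t' ≤ w t

theorem S4 {b : Bool} : ∀ (e : Exp V), PureB b e →
    ∀ (S : Set (Exp V)) (x : Q V) (w : Exp V → Q V), Sys b S x w → e ∈ S → mk e * x ≤ w e := by
  intro e
  induction e with
  | zero =>
    intro _ S x w _ _
    simpa using zero_le (w Exp.zero)
  | one =>
    intro _ S x w sys he
    simpa using sys.h2 _ he rfl
  | push u =>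
    intro hp S x w sys he
    cases b with
    | true => exact absurd hp (by intro h; nomatch h)
    | false =>
      have h1S : Exp.one ∈ S := sys.clD _ he u Exp.one (by simp [pderiv])
      have := sys.h1 _ he u Exp.one (by simp [pderiv])
      simp only [ltr, if_neg Bool.false_ne_true] at this
      calc mk (Exp.push u) * x ≤ mk (Exp.push u) * w Exp.one :=
            mul_le_mul_right (sys.h2 _ h1S rfl) _
      _ ≤ w (Exp.push u) := by simpa using this
  | pop u =>
    intro hp S x w sys he
    cases b with
    | false => exact absurd hp (by intro h; nomatch h)
    | true =>
      have h1S : Exp.one ∈ S := sys.clD _ he u Exp.one (by simp [pderiv])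
      have := sys.h1 _ he u Exp.one (by simp [pderiv])
      simp only [ltr, if_pos rfl] at this
      calc mk (Exp.pop u) * x ≤ mk (Exp.pop u) * w Exp.one :=
            mul_le_mul_right (sys.h2 _ h1S rfl) _
      _ ≤ w (Exp.pop u) := by simpa using this
  | plus a c iha ihc =>
    intro hp S x w sys he
    obtain ⟨hpa, hpc⟩ := pureB_plus hp
    have haS : a ∈ S := sys.clE _ he a (by simp [eps])
    have hcS : c ∈ S := sys.clE _ he c (by simp [eps])
    have h1 := (iha hpa S x w sys haS).trans (sys.h3 _ he a (by simp [eps]))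
    have h2 := (ihc hpc S x w sys hcS).trans (sys.h3 _ he c (by simp [eps]))
    calc mk (a.plus c) * x = mk a * x + mk c * x := by rw [mk_plus, add_mul]
    _ ≤ w (a.plus c) := add_le h1 h2
  | seq a c iha ihc =>
    intro hp S x w sys he
    obtain ⟨hpa, hpc⟩ := pureB_seq hp
    set S₁ : Set (Exp V) := {t | t.seq c ∈ S} with hS₁
    have memD : ∀ t ∈ S₁, ∀ v : V, ∀ t' ∈ pderiv b v t, (t'.seq c) ∈ pderiv b v (t.seq c) := by
      intro t _ v t' h
      simp only [pderiv]
      exact List.mem_append.2 (Or.inl (List.mem_map.2 ⟨t', h, rfl⟩))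
    have memE : ∀ t t' : Exp V, t' ∈ eps t → (t'.seq c) ∈ eps (t.seq c) := by
      intro t t' h
      simp only [eps]
      exact List.mem_append.2 (Or.inr (List.mem_map.2 ⟨t', h, rfl⟩))
    have memU : ∀ t t' : Exp V, t' ∈ unf t → (t'.seq c) ∈ unf (t.seq c) := by
      intro t t' h
      simp only [unf]
      exact List.mem_map.2 ⟨t', h, rfl⟩
    have memN : ∀ t : Exp V, nul t = true → c ∈ eps (t.seq c) := by
      intro t hn
      simp [eps, hn]
    have sys₁ : Sys b S₁ (mk c * x) (fun t => w (t.seq c)) := by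
      constructor
      · intro t ht v t' h; exact sys.clD _ ht v _ (memD t ht v t' h)
      · intro t ht t' h; exact sys.clE _ ht _ (memE t t' h)
      · intro t ht t' h; exact sys.clU _ ht _ (memU t t' h)
      · intro t ht v t' h; exact sys.h1 _ ht v _ (memD t ht v t' h)
      · intro t ht hn
        have hcS : c ∈ S := sys.clE _ ht c (memN t hn)
        exact (ihc hpc S x w sys hcS).trans (sys.h3 _ ht c (memN t hn))
      · intro t ht t' h; exact sys.h3 _ ht _ (memE t t' h)
      · intro t ht t' h; exact sys.h4 _ ht _ (memU t t' h)
    have haS₁ : a ∈ S₁ := he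
    have := iha hpa S₁ (mk c * x) (fun t => w (t.seq c)) sys₁ haS₁
    calc mk (a.seq c) * x = mk a * (mk c * x) := by rw [mk_seq, mul_assoc]
    _ ≤ w (a.seq c) := this
  | star a iha =>
    intro hp S x w sys he
    have hpa := pureB_star hp
    rw [mk_star]
    refine kstar_mul_le (sys.h2 _ he rfl) ?_
    set S₁ : Set (Exp V) := {t | t.seq a.star ∈ S} with hS₁
    have memD : ∀ t ∈ S₁, ∀ v : V, ∀ t' ∈ pderiv b v t,
        (t'.seq a.star) ∈ pderiv b v (t.seq a.star) := by
      intro t _ v t' h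
      simp only [pderiv]
      exact List.mem_append.2 (Or.inl (List.mem_map.2 ⟨t', h, rfl⟩))
    have memE : ∀ t t' : Exp V, t' ∈ eps t → (t'.seq a.star) ∈ eps (t.seq a.star) := by
      intro t t' h
      simp only [eps]
      exact List.mem_append.2 (Or.inr (List.mem_map.2 ⟨t', h, rfl⟩))
    have memU : ∀ t t' : Exp V, t' ∈ unf t → (t'.seq a.star) ∈ unf (t.seq a.star) := by
      intro t t' h
      simp only [unf]
      exact List.mem_map.2 ⟨t', h, rfl⟩
    have memN : ∀ t : Exp V, nul t = true → a.star ∈ eps (t.seq a.star) := by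
      intro t hn
      simp [eps, hn]
    have sys₁ : Sys b S₁ (w a.star) (fun t => w (t.seq a.star)) := by
      constructor
      · intro t ht v t' h; exact sys.clD _ ht v _ (memD t ht v t' h)
      · intro t ht t' h; exact sys.clE _ ht _ (memE t t' h)
      · intro t ht t' h; exact sys.clU _ ht _ (memU t t' h)
      · intro t ht v t' h; exact sys.h1 _ ht v _ (memD t ht v t' h)
      · intro t ht hn; exact sys.h3 _ ht _ (memN t hn)
      · intro t ht t' h; exact sys.h3 _ ht _ (memE t t' h)
      · intro t ht t' h; exact sys.h4 _ ht _ (memU t t' h)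
    have haS₁ : a ∈ S₁ := sys.clU _ he (a.seq a.star) (by simp [unf])
    have h5 := iha hpa S₁ (w a.star) (fun t => w (t.seq a.star)) sys₁ haS₁
    exact h5.trans (sys.h4 _ he (a.seq a.star) (by simp [unf]))

/-! ### Solving left-linear systems -/

lemma sum_P {ι : Type*} (P : Q V → Prop) (P0 : P 0) (Padd : ∀ a b, P a → P b → P (a + b))
    (s : Finset ι) (f : ι → Q V) (h : ∀ i ∈ s, P (f i)) : P (∑ i ∈ s, f i) :=
  Finset.sum_induction f P (fun a b ha hb => Padd a b ha hb) P0 h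

theorem solveFin : ∀ (n : ℕ) (A : Fin n → Fin n → Q V) (bv : Fin n → Q V),
    ∃ y : Fin n → Q V,
      (∀ p, y p = bv p + ∑ r, A p r * y r) ∧
      (∀ (c : Q V) (z : Fin n → Q V),
        (∀ p, bv p * c + ∑ r, A p r * z r ≤ z p) → ∀ p, y p * c ≤ z p) ∧
      (∀ (P : Q V → Prop), P 0 → P 1 →
        (∀ a b, P a → P b → P (a + b)) → (∀ a b, P a → P b → P (a * b)) →
        (∀ a, P a → P a∗) → (∀ p r, P (A p r)) → (∀ p, P (bv p)) → ∀ p, P (y p)) := by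
  intro n
  induction n with
  | zero =>
    intro A bv
    exact ⟨fun p => 0, fun p => p.elim0, fun c z _ p => p.elim0,
      fun P _ _ _ _ _ _ _ p => p.elim0⟩
  | succ n ih =>
    intro A bv
    obtain ⟨y', hEQ, hMIN, hGEN⟩ := ih
      (fun p r => A p.castSucc r.castSucc
        + A p.castSucc (Fin.last n) * ((A (Fin.last n) (Fin.last n))∗ * A (Fin.last n) r.castSucc))
      (fun p => bv p.castSucc
        + A p.castSucc (Fin.last n) * ((A (Fin.last n) (Fin.last n))∗ * bv (Fin.last n)))
    set L : Fin (n + 1) := Fin.last n with hL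
    set AL : Q V := A L L with hAL
    set s : Q V := bv L + ∑ r : Fin n, A L r.castSucc * y' r with hs
    set yL : Q V := AL∗ * s with hyL
    set y : Fin (n + 1) → Q V := Fin.lastCases yL y' with hy
    have hylast : y L = yL := by simp [hy, hL]
    have hycs : ∀ q : Fin n, y q.castSucc = y' q := by
      intro q; simp [hy]
    have sumsplit : ∀ f : Fin (n + 1) → Q V,
        (∑ r : Fin (n + 1), f r) = (∑ r : Fin n, f r.castSucc) + f L :=
      fun f => Fin.sum_univ_castSucc f
    have yLfix : yL = s + AL * yL := by
      conv_lhs => rw [hyL, kstar_unfold AL]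
      rw [add_mul, one_mul, mul_assoc]
    refine ⟨y, ?_, ?_, ?_⟩
    · -- fixpoint equations
      intro p
      induction p using Fin.lastCases with
      | last =>
        rw [hylast, sumsplit (fun r => A L r * y r), hylast]
        have h2 : (∑ r : Fin n, A L r.castSucc * y r.castSucc)
            = ∑ r : Fin n, A L r.castSucc * y' r :=
          Finset.sum_congr rfl fun r _ => by rw [hycs]
        rw [h2, ← add_assoc, ← hs, ← hAL]
        exact yLfix
      | cast q =>
        rw [hycs, sumsplit (fun r => A q.castSucc r * y r), hylast]
        have h2 : (∑ r : Fin n, A q.castSucc r.castSucc * y r.castSucc)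
            = ∑ r : Fin n, A q.castSucc r.castSucc * y' r :=
          Finset.sum_congr rfl fun r _ => by rw [hycs]
        rw [h2, hEQ q, hyL, hs]
        simp only [← hL, ← hAL, add_mul, mul_add, mul_assoc, Finset.mul_sum,
          Finset.sum_add_distrib]
        abel
    · -- minimality
      intro c z hyp
      have hsum : ∀ p : Fin (n + 1),
          (∑ r : Fin n, A p r.castSucc * z r.castSucc) ≤ ∑ r : Fin (n + 1), A p r * z r := by
        intro p
        rw [sumsplit (fun r => A p r * z r)]
        exact self_le_add_right _ _
      have hALz : AL * z L ≤ z L := by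
        refine le_trans ?_ (hyp L)
        refine le_trans ?_ (self_le_add_left _ _)
        exact le_sum (fun r => A L r * z r) (Finset.mem_univ L)
      have hzL : AL∗ * (bv L * c + ∑ r : Fin n, A L r.castSucc * z r.castSucc) ≤ z L := by
        refine kstar_mul_le ?_ hALz
        exact le_trans (add_le_add_right (hsum L) _) (hyp L)
      have hred : ∀ q : Fin n,
          (bv q.castSucc + A q.castSucc L * (AL∗ * bv L)) * c
            + ∑ r : Fin n, (A q.castSucc r.castSucc
               + A q.castSucc L * (AL∗ * A L r.castSucc)) * z r.castSucc
          ≤ z q.castSucc := by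
        intro q
        have e1 : (bv q.castSucc + A q.castSucc L * (AL∗ * bv L)) * c
            + ∑ r : Fin n, (A q.castSucc r.castSucc
               + A q.castSucc L * (AL∗ * A L r.castSucc)) * z r.castSucc
            = (bv q.castSucc * c + ∑ r : Fin n, A q.castSucc r.castSucc * z r.castSucc)
              + A q.castSucc L
                * (AL∗ * (bv L * c + ∑ r : Fin n, A L r.castSucc * z r.castSucc)) := by
          simp only [add_mul, mul_add, mul_assoc, Finset.mul_sum, Finset.sum_add_distrib]
          abel
        rw [e1]
        refine add_le ?_ ?_
        · exact le_trans (add_le_add_right (hsum q.castSucc) _) (hyp q.castSucc)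
        · refine le_trans (mul_le_mul_right hzL _) ?_
          refine le_trans ?_ (hyp q.castSucc)
          refine le_trans ?_ (self_le_add_left _ _)
          exact le_sum (fun r => A q.castSucc r * z r) (Finset.mem_univ L)
      have hm := hMIN c (fun r => z r.castSucc) (by simpa [← hL, ← hAL] using hred)
      intro p
      induction p using Fin.lastCases with
      | last =>
        rw [hylast, hyL, mul_assoc]
        refine le_trans (mul_le_mul_right ?_ _) hzL
        rw [hs, add_mul]
        refine add_le_add_right ?_ _
        rw [Finset.sum_mul]
        refine Finset.sum_le_sum fun r _ => ?_
        rw [mul_assoc]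
        exact mul_le_mul_right (hm r) _
      | cast q =>
        rw [hycs]
        exact hm q
    · -- generation
      intro P P0 P1 Padd Pmul Pstar PA Pb
      have Py' := hGEN P P0 P1 Padd Pmul Pstar
        (fun q r => Padd _ _ (PA _ _) (Pmul _ _ (PA _ _) (Pmul _ _ (Pstar _ (PA _ _)) (PA _ _))))
        (fun q => Padd _ _ (Pb _) (Pmul _ _ (PA _ _) (Pmul _ _ (Pstar _ (PA _ _)) (Pb _))))
      intro p
      induction p using Fin.lastCases with
      | last =>
        rw [hylast, hyL]
        refine Pmul _ _ (Pstar _ (PA _ _)) (Padd _ _ (Pb _) ?_)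
        exact sum_P P P0 Padd _ _ fun r _ => Pmul _ _ (PA _ _) (Py' r)
      | cast q =>
        rw [hycs]
        exact Py' q

theorem solveF {σ : Type} [Fintype σ] (A : σ → σ → Q V) (bv : σ → Q V) :
    ∃ y : σ → Q V,
      (∀ p, y p = bv p + ∑ r, A p r * y r) ∧
      (∀ (c : Q V) (z : σ → Q V),
        (∀ p, bv p * c + ∑ r, A p r * z r ≤ z p) → ∀ p, y p * c ≤ z p) ∧
      (∀ (P : Q V → Prop), P 0 → P 1 →
        (∀ a b, P a → P b → P (a + b)) → (∀ a b, P a → P b → P (a * b)) →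
        (∀ a, P a → P a∗) → (∀ p r, P (A p r)) → (∀ p, P (bv p)) → ∀ p, P (y p)) := by
  classical
  set eqv := Fintype.equivFin σ with heqv
  obtain ⟨y, hEQ, hMIN, hGEN⟩ := solveFin (Fintype.card σ)
    (fun p r => A (eqv.symm p) (eqv.symm r))
    (fun p => bv (eqv.symm p))
  refine ⟨fun t => y (eqv t), ?_, ?_, ?_⟩
  · intro p
    have h2 : (∑ r : Fin (Fintype.card σ), A p (eqv.symm r) * y r)
        = ∑ r : σ, A p r * y (eqv r) :=
      Fintype.sum_equiv eqv.symm _ _ (fun r => by simp)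
    have h1 : y (eqv p) = bv p + ∑ r : Fin (Fintype.card σ), A p (eqv.symm r) * y r := by
      simpa using hEQ (eqv p)
    show y (eqv p) = bv p + ∑ r : σ, A p r * y (eqv r)
    rw [h1, h2]
  · intro c z hyp
    have hyp' : ∀ p : Fin (Fintype.card σ),
        bv (eqv.symm p) * c + ∑ r, A (eqv.symm p) (eqv.symm r) * z (eqv.symm r)
          ≤ z (eqv.symm p) := by
      intro p
      refine le_trans (le_of_eq ?_) (hyp (eqv.symm p))
      congr 1
      exact Fintype.sum_equiv eqv.symm
        (fun r => A (eqv.symm p) (eqv.symm r) * z (eqv.symm r))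
        (fun r => A (eqv.symm p) r * z r) (fun r => rfl)
    intro p
    simpa using hMIN c (fun r => z (eqv.symm r)) hyp' (eqv p)
  · intro P P0 P1 Padd Pmul Pstar PA Pb p
    exact hGEN P P0 P1 Padd Pmul Pstar (fun p r => PA _ _) (fun p => Pb _) (eqv p)

/-! ### Pure classes in the quotient -/

def PurePopQ (x : Q V) : Prop := ∃ t, PurePop t ∧ x = mk t
def PurePushQ (x : Q V) : Prop := ∃ t, PurePush t ∧ x = mk t

lemma PurePopQ_zero : PurePopQ (0 : Q V) := ⟨Exp.zero, PurePop.zero, rfl⟩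
lemma PurePopQ_one : PurePopQ (1 : Q V) := ⟨Exp.one, PurePop.one, rfl⟩
lemma PurePopQ_add {x y : Q V} : PurePopQ x → PurePopQ y → PurePopQ (x + y) := by
  rintro ⟨t, ht, rfl⟩ ⟨u, hu, rfl⟩; exact ⟨t.plus u, PurePop.plus ht hu, rfl⟩
lemma PurePopQ_mul {x y : Q V} : PurePopQ x → PurePopQ y → PurePopQ (x * y) := by
  rintro ⟨t, ht, rfl⟩ ⟨u, hu, rfl⟩; exact ⟨t.seq u, PurePop.seq ht hu, rfl⟩
lemma PurePopQ_star {x : Q V} : PurePopQ x → PurePopQ x∗ := by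
  rintro ⟨t, ht, rfl⟩; exact ⟨t.star, PurePop.star ht, rfl⟩
lemma PurePushQ_zero : PurePushQ (0 : Q V) := ⟨Exp.zero, PurePush.zero, rfl⟩
lemma PurePushQ_one : PurePushQ (1 : Q V) := ⟨Exp.one, PurePush.one, rfl⟩
lemma PurePushQ_add {x y : Q V} : PurePushQ x → PurePushQ y → PurePushQ (x + y) := by
  rintro ⟨t, ht, rfl⟩ ⟨u, hu, rfl⟩; exact ⟨t.plus u, PurePush.plus ht hu, rfl⟩
lemma PurePushQ_mul {x y : Q V} : PurePushQ x → PurePushQ y → PurePushQ (x * y) := by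
  rintro ⟨t, ht, rfl⟩ ⟨u, hu, rfl⟩; exact ⟨t.seq u, PurePush.seq ht hu, rfl⟩
lemma PurePushQ_star {x : Q V} : PurePushQ x → PurePushQ x∗ := by
  rintro ⟨t, ht, rfl⟩; exact ⟨t.star, PurePush.star ht, rfl⟩

/-! ### Generic saturation automata -/

structure Aut (V σ : Type) : Type where
  pstep : σ → V → σ → Prop
  dstep : σ → V → σ → Prop
  bse : σ → σ → Prop
  fin : σ

section Auto

variable [Fintype V] {σ : Type} [Fintype σ]

inductive Bb (α : Aut V σ) : σ → σ → Prop
  | refl (p : σ) : Bb α p p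
  | base {p q : σ} : α.bse p q → Bb α p q
  | trans {p q r : σ} : Bb α p q → Bb α q r → Bb α p r
  | wrap {p : σ} {v : V} {p' q' q : σ} :
      α.dstep p v p' → Bb α p' q' → α.pstep q' v q → Bb α p q

def Epop (α : Aut V σ) (p r : σ) (v : V) : Prop := ∃ p₁, Bb α p p₁ ∧ α.pstep p₁ v r
def Epush (α : Aut V σ) (p r : σ) (v : V) : Prop := ∃ p₁, Bb α p p₁ ∧ α.dstep p₁ v r

noncomputable def Apop (α : Aut V σ) (p r : σ) : Q V :=
  ∑ v : V, if Epop α p r v then mk (Exp.pop v) else 0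
noncomputable def Apush (α : Aut V σ) (p r : σ) : Q V :=
  ∑ v : V, if Epush α p r v then mk (Exp.push v) else 0

noncomputable def Nmat (α : Aut V σ) (q : σ) : σ → Q V :=
  (solveF (Apop α) (fun p => if Bb α p q then 1 else 0)).choose

noncomputable def Mvec (α : Aut V σ) : σ → Q V :=
  (solveF (Apush α) (fun p => if Bb α p α.fin then 1 else 0)).choose

lemma NEQ (α : Aut V σ) (q p : σ) :
    Nmat α q p = (if Bb α p q then 1 else 0) + ∑ r, Apop α p r * Nmat α q r :=
  (solveF (Apop α) (fun p => if Bb α p q then 1 else 0)).choose_spec.1 p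

lemma NMIN (α : Aut V σ) (q : σ) (c : Q V) (z : σ → Q V)
    (h : ∀ p, (if Bb α p q then 1 else 0) * c + ∑ r, Apop α p r * z r ≤ z p) :
    ∀ p, Nmat α q p * c ≤ z p :=
  (solveF (Apop α) (fun p => if Bb α p q then 1 else 0)).choose_spec.2.1 c z h

lemma NGEN (α : Aut V σ) (q : σ) (P : Q V → Prop) (P0 : P 0) (P1 : P 1)
    (Padd : ∀ a b, P a → P b → P (a + b)) (Pmul : ∀ a b, P a → P b → P (a * b))
    (Pstar : ∀ a, P a → P a∗) (PA : ∀ p r, P (Apop α p r))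
    (Pb : ∀ p, P (if Bb α p q then 1 else 0)) : ∀ p, P (Nmat α q p) :=
  (solveF (Apop α) (fun p => if Bb α p q then 1 else 0)).choose_spec.2.2 P P0 P1 Padd Pmul
    Pstar PA Pb

lemma MEQ (α : Aut V σ) (p : σ) :
    Mvec α p = (if Bb α p α.fin then 1 else 0) + ∑ r, Apush α p r * Mvec α r :=
  (solveF (Apush α) (fun p => if Bb α p α.fin then 1 else 0)).choose_spec.1 p

lemma MMIN (α : Aut V σ) (c : Q V) (z : σ → Q V)
    (h : ∀ p, (if Bb α p α.fin then 1 else 0) * c + ∑ r, Apush α p r * z r ≤ z p) :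
    ∀ p, Mvec α p * c ≤ z p :=
  (solveF (Apush α) (fun p => if Bb α p α.fin then 1 else 0)).choose_spec.2.1 c z h

lemma MGEN (α : Aut V σ) (P : Q V → Prop) (P0 : P 0) (P1 : P 1)
    (Padd : ∀ a b, P a → P b → P (a + b)) (Pmul : ∀ a b, P a → P b → P (a * b))
    (Pstar : ∀ a, P a → P a∗) (PA : ∀ p r, P (Apush α p r))
    (Pb : ∀ p, P (if Bb α p α.fin then 1 else 0)) : ∀ p, P (Mvec α p) :=
  (solveF (Apush α) (fun p => if Bb α p α.fin then 1 else 0)).choose_spec.2.2 P P0 P1 Padd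
    Pmul Pstar PA Pb

noncomputable def Gv (α : Aut V σ) (p : σ) : Q V := ∑ q : σ, Nmat α q p * Mvec α q

/-! #### Purity of the parts -/

lemma N_purePop (α : Aut V σ) (q p : σ) : PurePopQ (Nmat α q p) := by
  refine NGEN α q PurePopQ PurePopQ_zero PurePopQ_one (fun _ _ => PurePopQ_add)
    (fun _ _ => PurePopQ_mul) (fun _ => PurePopQ_star) ?_ ?_ p
  · intro p r
    refine sum_P PurePopQ PurePopQ_zero (fun _ _ => PurePopQ_add) _ _ fun v _ => ?_
    by_cases h : Epop α p r v
    · simpa [h] using ⟨Exp.pop v, PurePop.pop v, rfl⟩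
    · simpa [h] using PurePopQ_zero
  · intro p
    by_cases h : Bb α p q
    · simpa [h] using PurePopQ_one
    · simpa [h] using PurePopQ_zero

lemma M_purePush (α : Aut V σ) (p : σ) : PurePushQ (Mvec α p) := by
  refine MGEN α PurePushQ PurePushQ_zero PurePushQ_one (fun _ _ => PurePushQ_add)
    (fun _ _ => PurePushQ_mul) (fun _ => PurePushQ_star) ?_ ?_ p
  · intro p r
    refine sum_P PurePushQ PurePushQ_zero (fun _ _ => PurePushQ_add) _ _ fun v _ => ?_
    by_cases h : Epush α p r v
    · simpa [h] using ⟨Exp.push v, PurePush.push v, rfl⟩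
    · simpa [h] using PurePushQ_zero
  · intro p
    by_cases h : Bb α p α.fin
    · simpa [h] using PurePushQ_one
    · simpa [h] using PurePushQ_zero

/-! #### Monotonicity -/

lemma Apop_mono (α : Aut V σ) {p p₁ : σ} (h : Bb α p p₁) (r : σ) :
    Apop α p₁ r ≤ Apop α p r := by
  refine Finset.sum_le_sum fun v _ => ?_
  by_cases h1 : Epop α p₁ r v
  · have h2 : Epop α p r v := by
      obtain ⟨p₂, hb, hs⟩ := h1
      exact ⟨p₂, Bb.trans h hb, hs⟩
    simp [h1, h2, le_refl]
  · simp [h1]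
lemma Apush_mono (α : Aut V σ) {p p₁ : σ} (h : Bb α p p₁) (r : σ) :
    Apush α p₁ r ≤ Apush α p r := by
  refine Finset.sum_le_sum fun v _ => ?_
  by_cases h1 : Epush α p₁ r v
  · have h2 : Epush α p r v := by
      obtain ⟨p₂, hb, hs⟩ := h1
      exact ⟨p₂, Bb.trans h hb, hs⟩
    simp [h1, h2, le_refl]
  · simp [h1]

lemma bq_mono (α : Aut V σ) {p p₁ : σ} (h : Bb α p p₁) (q : σ) :
    (if Bb α p₁ q then (1 : Q V) else 0) ≤ (if Bb α p q then 1 else 0) := by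
  by_cases h1 : Bb α p₁ q
  · simp [h1, Bb.trans h h1, le_refl]
  · simp [h1]

lemma N_mono (α : Aut V σ) {p p₁ : σ} (h : Bb α p p₁) (q : σ) :
    Nmat α q p₁ ≤ Nmat α q p := by
  rw [NEQ α q p₁, NEQ α q p]
  exact add_le_add (bq_mono α h q)
    (Finset.sum_le_sum fun r _ => mul_le_mul_left (Apop_mono α h r) _)

lemma M_mono (α : Aut V σ) {p p₁ : σ} (h : Bb α p p₁) :
    Mvec α p₁ ≤ Mvec α p := by
  rw [MEQ α p₁, MEQ α p]
  exact add_le_add (bq_mono α h α.fin)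
    (Finset.sum_le_sum fun r _ => mul_le_mul_left (Apush_mono α h r) _)

lemma G_mono (α : Aut V σ) {p p₁ : σ} (h : Bb α p p₁) : Gv α p₁ ≤ Gv α p :=
  Finset.sum_le_sum fun q _ => mul_le_mul_left (N_mono α h q) _

/-! #### One-step absorption -/

lemma M_self_le_G (α : Aut V σ) (p : σ) : Mvec α p ≤ Gv α p := by
  have h1 : (1 : Q V) ≤ Nmat α p p := by
    rw [NEQ α p p]
    refine le_trans ?_ (self_le_add_right _ _)
    simp [Bb.refl p]
  calc Mvec α p = 1 * Mvec α p := (one_mul _).symm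
  _ ≤ Nmat α p p * Mvec α p := mul_le_mul_left h1 _
  _ ≤ Gv α p := le_sum _ (Finset.mem_univ p)

lemma G_fin (α : Aut V σ) {p : σ} (h : Bb α p α.fin) : 1 ≤ Gv α p := by
  have hM : (1 : Q V) ≤ Mvec α p := by
    rw [MEQ α p]
    refine le_trans ?_ (self_le_add_right _ _)
    simp [h]
  exact hM.trans (M_self_le_G α p)

lemma pop_le_Apop (α : Aut V σ) {p r : σ} {v : V} (h : Epop α p r v) :
    mk (Exp.pop v) ≤ Apop α p r := by
  have := le_sum (fun w => if Epop α p r w then mk (Exp.pop w) else (0 : Q V))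
    (Finset.mem_univ v)
  simpa [h, Apop] using this

lemma push_le_Apush (α : Aut V σ) {p r : σ} {v : V} (h : Epush α p r v) :
    mk (Exp.push v) ≤ Apush α p r := by
  have := le_sum (fun w => if Epush α p r w then mk (Exp.push w) else (0 : Q V))
    (Finset.mem_univ v)
  simpa [h, Apush] using this

lemma pop_N (α : Aut V σ) {p r : σ} {v : V} (h : Epop α p r v) (q : σ) :
    mk (Exp.pop v) * Nmat α q r ≤ Nmat α q p := by
  rw [NEQ α q p]
  refine le_trans (mul_le_mul_left (pop_le_Apop α h) _) ?_
  refine le_trans (le_sum (fun r' => Apop α p r' * Nmat α q r') (Finset.mem_univ r)) ?_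
  exact self_le_add_left _ _

lemma push_M (α : Aut V σ) {p r : σ} {v : V} (h : Epush α p r v) :
    mk (Exp.push v) * Mvec α r ≤ Mvec α p := by
  rw [MEQ α p]
  refine le_trans (mul_le_mul_left (push_le_Apush α h) _) ?_
  refine le_trans (le_sum (fun r' => Apush α p r' * Mvec α r') (Finset.mem_univ r)) ?_
  exact self_le_add_left _ _

lemma Fpop (α : Aut V σ) {p r : σ} {v : V} (h : α.pstep p v r) :
    mk (Exp.pop v) * Gv α r ≤ Gv α p := by
  rw [Gv, Finset.mul_sum]
  refine Finset.sum_le_sum fun q _ => ?_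
  rw [← mul_assoc]
  exact mul_le_mul_left (pop_N α ⟨p, Bb.refl p, h⟩ q) _

/-! #### The push absorption lemma -/

lemma push_Apop (α : Aut V σ) (p' r : σ) (v : V) :
    mk (Exp.push v) * Apop α p' r = if Epop α p' r v then 1 else 0 := by
  classical
  rw [Apop, Finset.mul_sum]
  rw [Finset.sum_eq_single v]
  · by_cases h : Epop α p' r v
    · simp only [h, if_true]
      exact sound (KAeq.push_pop v)
    · simp [h]
  · intro w _ hw
    by_cases h : Epop α p' r w
    · simp only [h, if_true]
      exact sound (KAeq.push_pop_ne (Ne.symm hw))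
    · simp [h]
  · intro h
    exact absurd (Finset.mem_univ v) h

lemma Fpush (α : Aut V σ) {p p' : σ} {v : V} (h : α.dstep p v p') :
    mk (Exp.push v) * Gv α p' ≤ Gv α p := by
  rw [Gv, Finset.mul_sum]
  refine sum_le_of_le _ _ _ fun q _ => ?_
  rw [← mul_assoc]
  have expand : mk (Exp.push v) * Nmat α q p'
      = (if Bb α p' q then mk (Exp.push v) else 0)
        + ∑ r, (if Epop α p' r v then (1 : Q V) else 0) * Nmat α q r := by
    rw [NEQ α q p', mul_add, Finset.mul_sum]
    congr 1
    · by_cases hb : Bb α p' q <;> simp [hb]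
    · refine Finset.sum_congr rfl fun r _ => ?_
      rw [← mul_assoc, push_Apop α p' r v]
  rw [expand, add_mul]
  refine add_le ?_ ?_
  · by_cases hb : Bb α p' q
    · simp only [hb, if_true]
      have h1 : Mvec α q ≤ Mvec α p' := M_mono α hb
      have h2 : mk (Exp.push v) * Mvec α p' ≤ Mvec α p :=
        push_M α ⟨p, Bb.refl p, h⟩
      calc mk (Exp.push v) * Mvec α q ≤ mk (Exp.push v) * Mvec α p' :=
            mul_le_mul_right h1 _
      _ ≤ Mvec α p := h2
      _ ≤ Gv α p := M_self_le_G α p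
    · simp [hb]
  · rw [Finset.sum_mul]
    refine sum_le_of_le _ _ _ fun r _ => ?_
    by_cases he : Epop α p' r v
    · simp only [he, if_true, one_mul]
      obtain ⟨q₁, hb, hs⟩ := he
      have hBpr : Bb α p r := Bb.wrap h hb hs
      calc Nmat α q r * Mvec α q ≤ Gv α r := le_sum _ (Finset.mem_univ q)
      _ ≤ Gv α p := G_mono α hBpr
    · simp [he]

/-! #### Soundness (upper bound for G) -/

lemma Bb_sound (α : Aut V σ) (h : σ → Q V)
    (hbase : ∀ p q, α.bse p q → h q ≤ h p)
    (hp : ∀ p v q, α.pstep p v q → mk (Exp.pop v) * h q ≤ h p)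
    (hd : ∀ p v q, α.dstep p v q → mk (Exp.push v) * h q ≤ h p) :
    ∀ p q, Bb α p q → h q ≤ h p := by
  intro p q hB
  induction hB with
  | refl p => exact le_refl _
  | base hb => exact hbase _ _ hb
  | trans _ _ ih1 ih2 => exact ih2.trans ih1
  | @wrap p v p' q' q hds hB hps ih =>
    have pp : (mk (Exp.push v) : Q V) * mk (Exp.pop v) = 1 := sound (KAeq.push_pop v)
    have e1 : h q = mk (Exp.push v) * (mk (Exp.pop v) * h q) := by
      rw [← mul_assoc, pp, one_mul]
    calc h q = mk (Exp.push v) * (mk (Exp.pop v) * h q) := e1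
    _ ≤ mk (Exp.push v) * h q' := mul_le_mul_right (hp _ _ _ hps) _
    _ ≤ mk (Exp.push v) * h p' := mul_le_mul_right ih _
    _ ≤ h p := hd _ _ _ hds

theorem autoGE (α : Aut V σ) (h : σ → Q V)
    (hbase : ∀ p q, α.bse p q → h q ≤ h p)
    (hp : ∀ p v q, α.pstep p v q → mk (Exp.pop v) * h q ≤ h p)
    (hd : ∀ p v q, α.dstep p v q → mk (Exp.push v) * h q ≤ h p)
    (hfin : 1 ≤ h α.fin) : ∀ p, Gv α p ≤ h p := by
  have hBs := Bb_sound α h hbase hp hd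
  have hM : ∀ p, Mvec α p ≤ h p := by
    have := MMIN α 1 h ?_
    · intro p; simpa using this p
    intro p
    refine add_le ?_ ?_
    · by_cases hb : Bb α p α.fin
      · simpa [hb] using hfin.trans (hBs _ _ hb)
      · simp [hb]
    · refine sum_le_of_le _ _ _ fun r _ => ?_
      rw [Apush, Finset.sum_mul]
      refine sum_le_of_le _ _ _ fun v _ => ?_
      by_cases he : Epush α p r v
      · simp only [he, if_true]
        obtain ⟨p₁, hb, hs⟩ := he
        exact (mul_le_mul_right (le_refl _) _).trans ((hd _ _ _ hs).trans (hBs _ _ hb))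
      · simp [he]
  have hN : ∀ q p, Nmat α q p * h q ≤ h p := by
    intro q
    refine NMIN α q (h q) h ?_
    intro p
    refine add_le ?_ ?_
    · by_cases hb : Bb α p q
      · simpa [hb] using hBs _ _ hb
      · simp [hb]
    · refine sum_le_of_le _ _ _ fun r _ => ?_
      rw [Apop, Finset.sum_mul]
      refine sum_le_of_le _ _ _ fun v _ => ?_
      by_cases he : Epop α p r v
      · simp only [he, if_true]
        obtain ⟨p₁, hb, hs⟩ := he
        exact (hp _ _ _ hs).trans (hBs _ _ hb)
      · simp [he]
  intro p
  refine sum_le_of_le _ _ _ fun q _ => ?_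
  exact (mul_le_mul_right (hM q) _).trans (hN q p)

end Auto

/-! ### Index helper -/

noncomputable def idxOf {l : List (Exp V)} {t : Exp V} (h : t ∈ l) : Fin l.length :=
  (List.get_of_mem h).choose

lemma idxOf_get {l : List (Exp V)} {t : Exp V} (h : t ∈ l) : l.get (idxOf h) = t :=
  (List.get_of_mem h).choose_spec

/-! ### Normal forms in the quotient -/

def NFQ (x : Q V) : Prop := ∃ e', IsNF e' ∧ x = mk e'

lemma NFQ_zero : NFQ (0 : Q V) := by
  refine ⟨Exp.zero.seq Exp.zero, IsNF.prod PurePop.zero PurePush.zero, ?_⟩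
  rw [mk_seq, mk_zero, zero_mul]

lemma NFQ_add {x y : Q V} (hx : NFQ x) (hy : NFQ y) : NFQ (x + y) := by
  obtain ⟨a, ha, rfl⟩ := hx
  obtain ⟨b, hb, rfl⟩ := hy
  exact ⟨a.plus b, IsNF.plus ha hb, rfl⟩

lemma NFQ_popPush {x y : Q V} (hx : PurePopQ x) (hy : PurePushQ y) : NFQ (x * y) := by
  obtain ⟨a, ha, rfl⟩ := hx
  obtain ⟨b, hb, rfl⟩ := hy
  exact ⟨a.seq b, IsNF.prod ha hb, rfl⟩

lemma NFQ_G [Fintype V] {σ : Type} [Fintype σ] (α : Aut V σ) (p : σ) : NFQ (Gv α p) :=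
  sum_P NFQ NFQ_zero (fun _ _ => NFQ_add) _ _ fun q _ =>
    NFQ_popPush (N_purePop α q p) (M_purePush α q)

/-! ### The sequential composition automaton -/

section SeqInst

variable [Fintype V]

abbrev SSt (d f : Exp V) : Type := Option (Fin (CL d).length ⊕ Fin (CL f).length)

noncomputable def seqAut (d f : Exp V) : Aut V (SSt d f) where
  pstep p v q :=
    match p, q with
    | some (Sum.inr t), some (Sum.inr t') => (CL f).get t' ∈ pderiv true v ((CL f).get t)
    | _, _ => False
  dstep p v q :=
    match p, q with
    | some (Sum.inl u), some (Sum.inl u') => (CL d).get u' ∈ pderiv false v ((CL d).get u)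
    | _, _ => False
  bse p q :=
    match p, q with
    | some (Sum.inl u), some (Sum.inl u') =>
        (CL d).get u' ∈ eps ((CL d).get u) ++ unf ((CL d).get u)
    | some (Sum.inl u), some (Sum.inr t) => nul ((CL d).get u) = true ∧ (CL f).get t = f
    | some (Sum.inr t), some (Sum.inr t') =>
        (CL f).get t' ∈ eps ((CL f).get t) ++ unf ((CL f).get t)
    | some (Sum.inr t), none => nul ((CL f).get t) = true
    | _, _ => False
  fin := none

noncomputable def seqH (d f : Exp V) : SSt d f → Q V
  | none => 1
  | some (Sum.inl u) => mk ((CL d).get u) * mk f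
  | some (Sum.inr t) => mk ((CL f).get t)

lemma seqGE (d f : Exp V) : ∀ p, Gv (seqAut d f) p ≤ seqH d f p := by
  refine autoGE (seqAut d f) (seqH d f) ?_ ?_ ?_ ?_
  · -- base
    rintro (_ | (u | t)) (_ | (u' | t')) hb
    all_goals try exact absurd hb (by intro h; exact h)
    · -- inl → inl
      rcases List.mem_append.1 hb with h | h
      · exact mul_le_mul_left (eps_sound h) _
      · exact mul_le_mul_left (unf_sound h) _
    · -- inl → inr
      obtain ⟨hn, hl⟩ := hb
      show mk ((CL f).get t') ≤ mk ((CL d).get u) * mk f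
      rw [hl]
      exact le_mul_of_one_le_left' (nul_sound hn)
    · -- inr → none
      exact nul_sound hb
    · -- inr → inr
      rcases List.mem_append.1 hb with h | h
      · exact eps_sound h
      · exact unf_sound h
  · -- pop steps
    rintro (_ | (u | t)) v (_ | (u' | t')) hs
    all_goals try exact absurd hs (by intro h; exact h)
    have := pderiv_sound (b := true) (v := v) hs
    simpa [ltr, seqH] using this
  · -- push steps
    rintro (_ | (u | t)) v (_ | (u' | t')) hs
    all_goals try exact absurd hs (by intro h; exact h)
    show mk (Exp.push v) * (mk ((CL d).get u') * mk f) ≤ mk ((CL d).get u) * mk f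
    rw [← mul_assoc]
    refine mul_le_mul_left ?_ _
    have := pderiv_sound (b := false) (v := v) hs
    simpa [ltr] using this
  · -- fin
    exact le_refl 1

lemma seqLE {d f : Exp V} (hd : PurePush d) (hf : PurePop f) :
    mk d * mk f ≤ Gv (seqAut d f) (some (Sum.inl (idxOf (CL_self d)))) := by
  -- pop-side valuation
  set α := seqAut d f with hα
  set wP : Exp V → Q V := fun t =>
    if h : t ∈ CL f then Gv α (some (Sum.inr (idxOf h))) else 0 with hwP
  have hwPval : ∀ {t} (h : t ∈ CL f), wP t = Gv α (some (Sum.inr (idxOf h))) := by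
    intro t h; rw [hwP]; exact dif_pos h
  have sysP : Sys true {t | t ∈ CL f} 1 wP := by
    constructor
    · exact fun t ht v t' h => CL_pderiv f t ht v t' h
    · exact fun t ht t' h => CL_eps f t ht t' h
    · exact fun t ht t' h => CL_unf f t ht t' h
    · intro t ht v t' h
      have ht' : t' ∈ CL f := CL_pderiv f t ht v t' h
      rw [hwPval ht, hwPval ht']
      have hstep : α.pstep (some (Sum.inr (idxOf ht))) v (some (Sum.inr (idxOf ht'))) := by
        show (CL f).get (idxOf ht') ∈ pderiv true v ((CL f).get (idxOf ht))
        rw [idxOf_get, idxOf_get]; exact h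
      simpa [ltr] using Fpop α hstep
    · intro t ht hn
      rw [hwPval ht]
      refine G_fin α ?_
      refine Bb.base ?_
      show nul ((CL f).get (idxOf ht)) = true
      rw [idxOf_get]; exact hn
    · intro t ht t' h
      have ht' : t' ∈ CL f := CL_eps f t ht t' h
      rw [hwPval ht, hwPval ht']
      refine G_mono α (Bb.base ?_)
      show (CL f).get (idxOf ht') ∈ eps ((CL f).get (idxOf ht)) ++ unf ((CL f).get (idxOf ht))
      rw [idxOf_get, idxOf_get]
      exact List.mem_append.2 (Or.inl h)
    · intro t ht t' h
      have ht' : t' ∈ CL f := CL_unf f t ht t' h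
      rw [hwPval ht, hwPval ht']
      refine G_mono α (Bb.base ?_)
      show (CL f).get (idxOf ht') ∈ eps ((CL f).get (idxOf ht)) ++ unf ((CL f).get (idxOf ht))
      rw [idxOf_get, idxOf_get]
      exact List.mem_append.2 (Or.inr h)
  have hfG : mk f * 1 ≤ wP f := S4 (b := true) f hf _ 1 wP sysP (CL_self f)
  -- push side
  set cf : Q V := Gv α (some (Sum.inr (idxOf (CL_self f)))) with hcf
  set wD : Exp V → Q V := fun u =>
    if h : u ∈ CL d then Gv α (some (Sum.inl (idxOf h))) else 0 with hwD
  have hwDval : ∀ {u} (h : u ∈ CL d), wD u = Gv α (some (Sum.inl (idxOf h))) := by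
    intro u h; rw [hwD]; exact dif_pos h
  have sysD : Sys false {u | u ∈ CL d} cf wD := by
    constructor
    · exact fun t ht v t' h => CL_pderiv d t ht v t' h
    · exact fun t ht t' h => CL_eps d t ht t' h
    · exact fun t ht t' h => CL_unf d t ht t' h
    · intro t ht v t' h
      have ht' : t' ∈ CL d := CL_pderiv d t ht v t' h
      rw [hwDval ht, hwDval ht']
      have hstep : α.dstep (some (Sum.inl (idxOf ht))) v (some (Sum.inl (idxOf ht'))) := by
        show (CL d).get (idxOf ht') ∈ pderiv false v ((CL d).get (idxOf ht))
        rw [idxOf_get, idxOf_get]; exact h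
      simpa [ltr] using Fpush α hstep
    · intro t ht hn
      rw [hwDval ht, hcf]
      refine G_mono α (Bb.base ?_)
      show nul ((CL d).get (idxOf ht)) = true ∧ (CL f).get (idxOf (CL_self f)) = f
      rw [idxOf_get, idxOf_get]
      exact ⟨hn, rfl⟩
    · intro t ht t' h
      have ht' : t' ∈ CL d := CL_eps d t ht t' h
      rw [hwDval ht, hwDval ht']
      refine G_mono α (Bb.base ?_)
      show (CL d).get (idxOf ht') ∈ eps ((CL d).get (idxOf ht)) ++ unf ((CL d).get (idxOf ht))
      rw [idxOf_get, idxOf_get]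
      exact List.mem_append.2 (Or.inl h)
    · intro t ht t' h
      have ht' : t' ∈ CL d := CL_unf d t ht t' h
      rw [hwDval ht, hwDval ht']
      refine G_mono α (Bb.base ?_)
      show (CL d).get (idxOf ht') ∈ eps ((CL d).get (idxOf ht)) ++ unf ((CL d).get (idxOf ht))
      rw [idxOf_get, idxOf_get]
      exact List.mem_append.2 (Or.inr h)
  have hdG : mk d * cf ≤ wD d := S4 (b := false) d hd _ cf wD sysD (CL_self d)
  have h1 : mk f ≤ cf := by
    rw [hcf]
    have := hfG
    rw [mul_one, hwPval (CL_self f)] at this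
    exact this
  calc mk d * mk f ≤ mk d * cf := mul_le_mul_right h1 _
  _ ≤ wD d := hdG
  _ = Gv α (some (Sum.inl (idxOf (CL_self d)))) := hwDval (CL_self d)

theorem seqNF {d f : Exp V} (hd : PurePush d) (hf : PurePop f) : NFQ (mk d * mk f) := by
  have hle := seqLE hd hf
  have hge := seqGE d f (some (Sum.inl (idxOf (CL_self d))))
  have hH : seqH d f (some (Sum.inl (idxOf (CL_self d)))) = mk d * mk f := by
    show mk ((CL d).get (idxOf (CL_self d))) * mk f = mk d * mk f
    rw [idxOf_get]
  have : Gv (seqAut d f) (some (Sum.inl (idxOf (CL_self d)))) = mk d * mk f :=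
    le_antisymm (hH ▸ hge) hle
  rw [← this]
  exact NFQ_G _ _

end SeqInst

/-! ### The star automaton -/

section StarInst

variable [Fintype V]

noncomputable def Lpool (L : List (Exp V × Exp V)) : List (Exp V) :=
  L.flatMap (fun pr => CL pr.1)
noncomputable def Dpool (L : List (Exp V × Exp V)) : List (Exp V) :=
  L.flatMap (fun pr => CL pr.2)

lemma mem_Lpool (L : List (Exp V × Exp V)) (i : Fin L.length) {t : Exp V}
    (h : t ∈ CL (L.get i).1) : t ∈ Lpool L :=
  List.mem_flatMap.2 ⟨L.get i, (L.get_mem i), h⟩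
lemma mem_Dpool (L : List (Exp V × Exp V)) (i : Fin L.length) {t : Exp V}
    (h : t ∈ CL (L.get i).2) : t ∈ Dpool L :=
  List.mem_flatMap.2 ⟨L.get i, (L.get_mem i), h⟩

abbrev TSt (L : List (Exp V × Exp V)) : Type :=
  Option ((Fin L.length × Fin (Lpool L).length) ⊕ (Fin L.length × Fin (Dpool L).length))

noncomputable def starAut (L : List (Exp V × Exp V)) : Aut V (TSt L) where
  pstep p v q :=
    match p, q with
    | some (Sum.inl (i, t)), some (Sum.inl (j, t')) =>
        i = j ∧ (Lpool L).get t' ∈ pderiv true v ((Lpool L).get t)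
    | _, _ => False
  dstep p v q :=
    match p, q with
    | some (Sum.inr (i, u)), some (Sum.inr (j, u')) =>
        i = j ∧ (Dpool L).get u' ∈ pderiv false v ((Dpool L).get u)
    | _, _ => False
  bse p q :=
    match p, q with
    | none, some (Sum.inl (i, t)) => (Lpool L).get t = (L.get i).1
    | some (Sum.inl (i, t)), some (Sum.inr (j, u)) =>
        i = j ∧ nul ((Lpool L).get t) = true ∧ (Dpool L).get u = (L.get i).2
    | some (Sum.inr (i, u)), none => nul ((Dpool L).get u) = true
    | some (Sum.inl (i, t)), some (Sum.inl (j, t')) =>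
        i = j ∧ (Lpool L).get t' ∈ eps ((Lpool L).get t) ++ unf ((Lpool L).get t)
    | some (Sum.inr (i, u)), some (Sum.inr (j, u')) =>
        i = j ∧ (Dpool L).get u' ∈ eps ((Dpool L).get u) ++ unf ((Dpool L).get u)
    | _, _ => False
  fin := none

noncomputable def xsum (L : List (Exp V × Exp V)) : Q V :=
  ∑ i : Fin L.length, mk (L.get i).1 * mk (L.get i).2

noncomputable def starH (L : List (Exp V × Exp V)) : TSt L → Q V
  | none => (xsum L)∗
  | some (Sum.inl (i, t)) => mk ((Lpool L).get t) * (mk (L.get i).2 * (xsum L)∗)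
  | some (Sum.inr (i, u)) => mk ((Dpool L).get u) * (xsum L)∗

lemma starGE (L : List (Exp V × Exp V)) : ∀ p, Gv (starAut L) p ≤ starH L p := by
  refine autoGE (starAut L) (starH L) ?_ ?_ ?_ ?_
  · -- base
    rintro (_ | ((⟨i, t⟩) | (⟨i, u⟩))) (_ | ((⟨j, t'⟩) | (⟨j, u'⟩))) hb
    all_goals try exact absurd hb (by intro h; exact h)
    · -- none → inl
      show mk ((Lpool L).get t') * (mk (L.get j).2 * (xsum L)∗) ≤ (xsum L)∗
      rw [hb, ← mul_assoc]
      have h1 : mk (L.get j).1 * mk (L.get j).2 ≤ xsum L :=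
        le_sum (fun i => mk (L.get i).1 * mk (L.get i).2) (Finset.mem_univ j)
      exact (mul_le_mul_left h1 _).trans mul_kstar_le_kstar
    · -- inl → inl (eps)
      obtain ⟨rfl, h⟩ := hb
      rcases List.mem_append.1 h with h | h
      · exact mul_le_mul_left (eps_sound h) _
      · exact mul_le_mul_left (unf_sound h) _
    · -- inl → inr
      obtain ⟨rfl, hn, hl⟩ := hb
      show mk ((Dpool L).get u') * (xsum L)∗
          ≤ mk ((Lpool L).get t) * (mk (L.get i).2 * (xsum L)∗)
      rw [hl]
      exact le_mul_of_one_le_left' (nul_sound hn)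
    · -- inr → none
      exact le_mul_of_one_le_left' (nul_sound hb)
    · -- inr → inr (eps)
      obtain ⟨rfl, h⟩ := hb
      rcases List.mem_append.1 h with h | h
      · exact mul_le_mul_left (eps_sound h) _
      · exact mul_le_mul_left (unf_sound h) _
  · -- pop steps
    rintro (_ | ((⟨i, t⟩) | (⟨i, u⟩))) v (_ | ((⟨j, t'⟩) | (⟨j, u'⟩))) hs
    all_goals try exact absurd hs (by intro h; exact h)
    obtain ⟨rfl, h⟩ := hs
    show mk (Exp.pop v) * (mk ((Lpool L).get t') * (mk (L.get i).2 * (xsum L)∗))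
        ≤ mk ((Lpool L).get t) * (mk (L.get i).2 * (xsum L)∗)
    rw [← mul_assoc]
    refine mul_le_mul_left ?_ _
    simpa [ltr] using pderiv_sound (b := true) (v := v) h
  · -- push steps
    rintro (_ | ((⟨i, t⟩) | (⟨i, u⟩))) v (_ | ((⟨j, t'⟩) | (⟨j, u'⟩))) hs
    all_goals try exact absurd hs (by intro h; exact h)
    obtain ⟨rfl, h⟩ := hs
    show mk (Exp.push v) * (mk ((Dpool L).get u') * (xsum L)∗)
        ≤ mk ((Dpool L).get u) * (xsum L)∗
    rw [← mul_assoc]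
    refine mul_le_mul_left ?_ _
    simpa [ltr] using pderiv_sound (b := false) (v := v) h
  · -- fin
    exact one_le_kstar

lemma starLE (L : List (Exp V × Exp V))
    (hpure : ∀ pr ∈ L, PurePop pr.1 ∧ PurePush pr.2) :
    (xsum L)∗ ≤ Gv (starAut L) none := by
  set α := starAut L with hα
  refine kstar_le_of_mul_le_right (G_fin α (Bb.refl none)) ?_
  rw [xsum, Finset.sum_mul]
  refine sum_le_of_le _ _ _ fun i _ => ?_
  -- push side for component i
  set di : Exp V := (L.get i).2 with hdi
  set ei : Exp V := (L.get i).1 with hei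
  set wD : Exp V → Q V := fun u =>
    if h : u ∈ CL di then Gv α (some (Sum.inr (i, idxOf (mem_Dpool L i h)))) else 0 with hwD
  have hwDval : ∀ {u} (h : u ∈ CL di),
      wD u = Gv α (some (Sum.inr (i, idxOf (mem_Dpool L i h)))) := by
    intro u h; rw [hwD]; exact dif_pos h
  have sysD : Sys false {u | u ∈ CL di} (Gv α none) wD := by
    constructor
    · exact fun t ht v t' h => CL_pderiv di t ht v t' h
    · exact fun t ht t' h => CL_eps di t ht t' h
    · exact fun t ht t' h => CL_unf di t ht t' h
    · intro t ht v t' h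
      have ht' : t' ∈ CL di := CL_pderiv di t ht v t' h
      rw [hwDval ht, hwDval ht']
      have hstep : α.dstep (some (Sum.inr (i, idxOf (mem_Dpool L i ht)))) v
          (some (Sum.inr (i, idxOf (mem_Dpool L i ht')))) := by
        refine ⟨rfl, ?_⟩
        rw [idxOf_get, idxOf_get]; exact h
      simpa [ltr] using Fpush α hstep
    · intro t ht hn
      rw [hwDval ht]
      refine G_mono α (Bb.base ?_)
      show nul ((Dpool L).get (idxOf (mem_Dpool L i ht))) = true
      rw [idxOf_get]; exact hn
    · intro t ht t' h
      have ht' : t' ∈ CL di := CL_eps di t ht t' h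
      rw [hwDval ht, hwDval ht']
      refine G_mono α (Bb.base ?_)
      refine ⟨rfl, ?_⟩
      rw [idxOf_get, idxOf_get]
      exact List.mem_append.2 (Or.inl h)
    · intro t ht t' h
      have ht' : t' ∈ CL di := CL_unf di t ht t' h
      rw [hwDval ht, hwDval ht']
      refine G_mono α (Bb.base ?_)
      refine ⟨rfl, ?_⟩
      rw [idxOf_get, idxOf_get]
      exact List.mem_append.2 (Or.inr h)
  have hdG : mk di * Gv α none ≤ wD di :=
    S4 (b := false) di (hpure _ ((L.get_mem i))).2 _ (Gv α none) wD sysD (CL_self di)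
  -- pop side for component i
  set ci : Q V := Gv α (some (Sum.inr (i, idxOf (mem_Dpool L i (CL_self di))))) with hci
  set wP : Exp V → Q V := fun t =>
    if h : t ∈ CL ei then Gv α (some (Sum.inl (i, idxOf (mem_Lpool L i h)))) else 0 with hwP
  have hwPval : ∀ {t} (h : t ∈ CL ei),
      wP t = Gv α (some (Sum.inl (i, idxOf (mem_Lpool L i h)))) := by
    intro t h; rw [hwP]; exact dif_pos h
  have sysP : Sys true {t | t ∈ CL ei} ci wP := by
    constructor
    · exact fun t ht v t' h => CL_pderiv ei t ht v t' h
    · exact fun t ht t' h => CL_eps ei t ht t' h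
    · exact fun t ht t' h => CL_unf ei t ht t' h
    · intro t ht v t' h
      have ht' : t' ∈ CL ei := CL_pderiv ei t ht v t' h
      rw [hwPval ht, hwPval ht']
      have hstep : α.pstep (some (Sum.inl (i, idxOf (mem_Lpool L i ht)))) v
          (some (Sum.inl (i, idxOf (mem_Lpool L i ht')))) := by
        refine ⟨rfl, ?_⟩
        rw [idxOf_get, idxOf_get]; exact h
      simpa [ltr] using Fpop α hstep
    · intro t ht hn
      rw [hwPval ht, hci]
      refine G_mono α (Bb.base ?_)
      refine ⟨rfl, ?_, ?_⟩
      · rw [idxOf_get]; exact hn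
      · rw [idxOf_get]
    · intro t ht t' h
      have ht' : t' ∈ CL ei := CL_eps ei t ht t' h
      rw [hwPval ht, hwPval ht']
      refine G_mono α (Bb.base ?_)
      refine ⟨rfl, ?_⟩
      rw [idxOf_get, idxOf_get]
      exact List.mem_append.2 (Or.inl h)
    · intro t ht t' h
      have ht' : t' ∈ CL ei := CL_unf ei t ht t' h
      rw [hwPval ht, hwPval ht']
      refine G_mono α (Bb.base ?_)
      refine ⟨rfl, ?_⟩
      rw [idxOf_get, idxOf_get]
      exact List.mem_append.2 (Or.inr h)
  have heG : mk ei * ci ≤ wP ei :=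
    S4 (b := true) ei (hpure _ ((L.get_mem i))).1 _ ci wP sysP (CL_self ei)
  have hlast : wP ei ≤ Gv α none := by
    rw [hwPval (CL_self ei)]
    refine G_mono α (Bb.base ?_)
    show (Lpool L).get (idxOf (mem_Lpool L i (CL_self ei))) = (L.get i).1
    rw [idxOf_get]
  calc mk (L.get i).1 * mk (L.get i).2 * Gv α none
      = mk ei * (mk di * Gv α none) := by rw [← hei, ← hdi, mul_assoc]
  _ ≤ mk ei * wD di := mul_le_mul_right hdG _
  _ = mk ei * ci := by rw [hwDval (CL_self di)]
  _ ≤ wP ei := heG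
  _ ≤ Gv α none := hlast

theorem starNF (L : List (Exp V × Exp V))
    (hpure : ∀ pr ∈ L, PurePop pr.1 ∧ PurePush pr.2) : NFQ ((xsum L)∗) := by
  have : Gv (starAut L) none = (xsum L)∗ :=
    le_antisymm (starGE L none) (starLE L hpure)
  rw [← this]
  exact NFQ_G _ _

end StarInst

/-! ### Assembling the main theorem -/

lemma listmap_sum_eq {γ : Type*} : ∀ (l : List γ) (g : γ → Q V),
    (l.map g).sum = ∑ i : Fin l.length, g (l.get i) := by
  intro l g
  induction l with
  | nil => simp
  | cons a l ih =>
    have h2 : (∑ i : Fin (a :: l).length, g ((a :: l).get i))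
        = g ((a :: l).get (0 : Fin (l.length + 1))) + ∑ i : Fin l.length, g ((a :: l).get i.succ) :=
      Fin.sum_univ_succ (fun i : Fin (l.length + 1) => g ((a :: l).get i))
    rw [List.map_cons, List.sum_cons, ih, h2]
    rfl

lemma NF_decomp : ∀ {e : Exp V}, IsNF e →
    ∃ Lst : List (Exp V × Exp V), (∀ pr ∈ Lst, PurePop pr.1 ∧ PurePush pr.2) ∧
      mk e = (Lst.map (fun pr => mk pr.1 * mk pr.2)).sum := by
  intro e h
  induction h with
  | @prod ebar d hp hq =>
    exact ⟨[(ebar, d)], by simp [hp, hq], by simp⟩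
  | @plus a b h1 h2 ih1 ih2 =>
    obtain ⟨L1, hp1, he1⟩ := ih1
    obtain ⟨L2, hp2, he2⟩ := ih2
    refine ⟨L1 ++ L2, ?_, ?_⟩
    · intro pr hpr
      rcases List.mem_append.1 hpr with h | h
      · exact hp1 pr h
      · exact hp2 pr h
    · rw [mk_plus, he1, he2, List.map_append, List.sum_append]

lemma NFQ_sandwich {p s : Exp V} (hp : PurePop p) (hs : PurePush s) :
    ∀ {z : Exp V}, IsNF z → NFQ (mk p * (mk z * mk s)) := by
  intro z h
  induction h with
  | @prod ebar dd h1 h2 =>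
    refine ⟨(p.seq ebar).seq (dd.seq s),
      IsNF.prod (PurePop.seq hp h1) (PurePush.seq h2 hs), ?_⟩
    simp [mul_assoc]
  | @plus a b h1 h2 ih1 ih2 =>
    simp only [mk_plus, add_mul, mul_add]
    exact NFQ_add ih1 ih2

lemma NFQ_mul [Fintype V] {x y : Q V} (hx : NFQ x) (hy : NFQ y) : NFQ (x * y) := by
  obtain ⟨a, ha, rfl⟩ := hx
  obtain ⟨b, hb, rfl⟩ := hy
  induction ha with
  | @prod ebar dd h1 h2 =>
    induction hb with
    | @prod fbar g h3 h4 =>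
      obtain ⟨z, hz, hzeq⟩ := seqNF h2 h3
      have heq : mk (ebar.seq dd) * mk (fbar.seq g) = mk ebar * (mk z * mk g) := by
        simp only [mk_seq, ← hzeq, mul_assoc]
      rw [heq]
      exact NFQ_sandwich h1 h4 hz
    | @plus b1 b2 h3 h4 ih3 ih4 =>
      rw [mk_plus, mul_add]
      exact NFQ_add ih3 ih4
  | @plus a1 a2 h1 h2 ih1 ih2 =>
    rw [mk_plus, add_mul]
    exact NFQ_add ih1 ih2

lemma NFQ_star [Fintype V] {x : Q V} (hx : NFQ x) : NFQ x∗ := by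
  obtain ⟨a, ha, rfl⟩ := hx
  obtain ⟨Lst, hpure, heq⟩ := NF_decomp ha
  have hx2 : mk a = xsum Lst := by
    rw [heq, listmap_sum_eq]; rfl
  rw [hx2]
  exact starNF Lst hpure

theorem NFQ_all [Fintype V] (e : Exp V) : NFQ (mk e) := by
  induction e with
  | zero => exact NFQ_zero
  | one => exact ⟨Exp.one.seq Exp.one, IsNF.prod PurePop.one PurePush.one, by simp⟩
  | plus a b iha ihb => rw [mk_plus]; exact NFQ_add iha ihb
  | seq a b iha ihb => rw [mk_seq]; exact NFQ_mul iha ihb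
  | star a iha => rw [mk_star]; exact NFQ_star iha
  | push v =>
    exact ⟨Exp.one.seq (Exp.push v), IsNF.prod PurePop.one (PurePush.push v), by simp⟩
  | pop v =>
    exact ⟨(Exp.pop v).seq Exp.one, IsNF.prod (PurePop.pop v) PurePush.one, by simp⟩

end StacKAT

/-- Every push-pop regular expression can be provably transformed to normal form. -/
theorem stmt18 {V : Type} [Fintype V] [Nonempty V] (e : Exp V) :
    ∃ e' : Exp V, IsNF e' ∧ KAeq e e' := by
  obtain ⟨e', hNF, heq⟩ := StacKAT.NFQ_all e
  exact ⟨e', hNF, StacKAT.mk_eq.1 heq⟩
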